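/- Along any CAVI sequence the ELBO increases monotonically: ELBO(q⁽ⁿ⁺¹⁾) ≥ ELBO(q⁽ⁿ⁾) for all n; moreover ELBO(q⁽ⁿ⁾) ≤ log(Σ_z p z) for all n, and hence the real sequence (ELBO(q⁽ⁿ⁾))_n converges. -/

import Mathlib

open Finset

variable {ι : Type*} {Z : ι → Type*}

/-- The ELBO of a mean-field family `q` for joint density `p`. -/
noncomputable def meanFieldELBO [Fintype ι] [DecidableEq ι] [∀ i, Fintype (Z i)]
    (p : (∀ i, Z i) → ℝ) (q : ∀ i, Z i → ℝ) : ℝ :=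
  ∑ z : ∀ i, Z i, (∏ i, q i (z i)) * (Real.log (p z) - ∑ i, Real.log (q i (z i)))

/-- `E₋ₖ(y)`: the expectation, over the coordinates other than `k` (distributed
according to the factors `q i`, `i ≠ k`), of `log p` of the configuration equal to `y`
at coordinate `k`. -/
noncomputable def Eminus [Fintype ι] [DecidableEq ι] [∀ i, Fintype (Z i)]
    (p : (∀ i, Z i) → ℝ) (q : ∀ i, Z i → ℝ) (k : ι) (y : Z k) : ℝ :=
  ∑ w : ∀ i : {i : ι // i ≠ k}, Z i, (∏ i : {i : ι // i ≠ k}, q i (w i)) *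
    Real.log (p (fun i => if h : i = k then h.symm ▸ y else w ⟨i, h⟩))

/-- The CAVI update at coordinate `k`: the pmf proportional to `exp (E₋ₖ ·)`. -/
noncomputable def caviUpdate [Fintype ι] [DecidableEq ι] [∀ i, Fintype (Z i)]
    (p : (∀ i, Z i) → ℝ) (q : ∀ i, Z i → ℝ) (k : ι) (y : Z k) : ℝ :=
  Real.exp (Eminus p q k y) / ∑ y' : Z k, Real.exp (Eminus p q k y')

/-- Gibbs' inequality / Jensen: `∑ w log(a/w) ≤ log ∑ a` for a pmf `w`. -/
lemma gibbs_ineq {α : Type*} [Fintype α] (w a : α → ℝ) (hw : ∀ x, 0 < w x)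
    (hw1 : ∑ x, w x = 1) (ha : ∀ x, 0 < a x) :
    ∑ x, w x * (Real.log (a x) - Real.log (w x)) ≤ Real.log (∑ x, a x) := by
  have h1 : ∑ x, w x * (Real.log (a x) - Real.log (w x))
      = ∑ x, w x • Real.log (a x / w x) := by
    refine Finset.sum_congr rfl fun x _ => ?_
    rw [Real.log_div (ha x).ne' (hw x).ne', smul_eq_mul]
  have h2 : ∑ x, w x • (a x / w x) = ∑ x, a x := by
    refine Finset.sum_congr rfl fun x _ => ?_
    rw [smul_eq_mul, mul_comm, div_mul_cancel₀ _ (hw x).ne']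
  rw [h1, ← h2]
  exact (strictConcaveOn_log_Ioi.concaveOn).le_map_sum (fun x _ => (hw x).le) hw1
    (fun x _ => div_pos (ha x) (hw x))

/-- Decomposition of the ELBO isolating coordinate `k`. -/
lemma elbo_decomp [Fintype ι] [DecidableEq ι] [∀ i, Fintype (Z i)]
    (p : (∀ i, Z i) → ℝ) (q : ∀ i, Z i → ℝ) (k : ι)
    (hq1 : ∀ i, ∑ y, q i y = 1) :
    meanFieldELBO p q =
      (∑ y, q k y * (Eminus p q k y - Real.log (q k y)))
      - ∑ w : ∀ i : {i : ι // i ≠ k}, Z i, (∏ i : {i : ι // i ≠ k}, q i (w i)) *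
          ∑ i : {i : ι // i ≠ k}, Real.log (q i (w i)) := by
  have hP1 : ∑ w : ∀ i : {i : ι // i ≠ k}, Z i, ∏ i : {i : ι // i ≠ k}, q i (w i) = 1 := by
    rw [← Fintype.prod_sum]
    simp [hq1]
  have hsub : ∀ (f : ι → ℝ), ∏ i, f i = f k * ∏ i : {i : ι // i ≠ k}, f i := by
    intro f
    rw [← Finset.mul_prod_erase univ f (mem_univ k)]
    congr 1
    exact Finset.prod_subtype (univ.erase k) (p := fun i => i ≠ k) (by simp) f
  have hsubs : ∀ (f : ι → ℝ), ∑ i, f i = f k + ∑ i : {i : ι // i ≠ k}, f i := by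
    intro f
    rw [← Finset.add_sum_erase univ f (mem_univ k)]
    congr 1
    exact Finset.sum_subtype (univ.erase k) (p := fun i => i ≠ k) (by simp) f
  rw [meanFieldELBO, ← ((Equiv.piSplitAt k Z).symm.sum_comp
    (fun z => (∏ i, q i (z i)) * (Real.log (p z) - ∑ i, Real.log (q i (z i))))),
    Fintype.sum_prod_type]
  have key : ∀ (y : Z k) (w : ∀ i : {i : ι // i ≠ k}, Z i),
      (∏ i, q i ((Equiv.piSplitAt k Z).symm (y, w) i)) *
        (Real.log (p ((Equiv.piSplitAt k Z).symm (y, w))) -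
          ∑ i, Real.log (q i ((Equiv.piSplitAt k Z).symm (y, w) i)))
      = q k y * ((∏ i : {i : ι // i ≠ k}, q i (w i)) *
          Real.log (p (fun i => if h : i = k then h.symm ▸ y else w ⟨i, h⟩)))
        - (q k y * Real.log (q k y)) * (∏ i : {i : ι // i ≠ k}, q i (w i))
        - q k y * ((∏ i : {i : ι // i ≠ k}, q i (w i)) *
            ∑ i : {i : ι // i ≠ k}, Real.log (q i (w i))) := by
    intro y w
    have hz : (Equiv.piSplitAt k Z).symm (y, w)
        = fun i => if h : i = k then h.symm ▸ y else w ⟨i, h⟩ := rfl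
    have hk : (if h : k = k then h.symm ▸ y else w ⟨k, h⟩) = y := by simp
    have hne : ∀ i : {i : ι // i ≠ k},
        (if h : (i : ι) = k then h.symm ▸ y else w ⟨i, h⟩) = w i := fun i => by
      rw [dif_neg i.2]
    rw [hz]
    beta_reduce
    rw [hsub fun i => q i (if h : i = k then h.symm ▸ y else w ⟨i, h⟩),
      hsubs fun i => Real.log (q i (if h : i = k then h.symm ▸ y else w ⟨i, h⟩))]
    rw [hk]
    simp only [hne]
    ring
  rw [Finset.sum_congr rfl fun y _ => Finset.sum_congr rfl fun w _ => key y w]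
  have hE : ∀ y : Z k, (∑ w : ∀ i : {i : ι // i ≠ k}, Z i,
      (∏ i : {i : ι // i ≠ k}, q i (w i)) *
        Real.log (p (fun i => if h : i = k then h.symm ▸ y else w ⟨i, h⟩)))
      = Eminus p q k y := fun y => rfl
  simp only [Finset.sum_sub_distrib, ← Finset.mul_sum, hE, hP1, mul_one]
  rw [← Finset.sum_mul, hq1 k, one_mul]
  simp only [mul_sub, Finset.sum_sub_distrib]

/-- `Eminus` depends only on the factors away from `k`. -/
lemma Eminus_congr [Fintype ι] [DecidableEq ι] [∀ i, Fintype (Z i)]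
    (p : (∀ i, Z i) → ℝ) (q q' : ∀ i, Z i → ℝ) (k : ι)
    (h : ∀ i, i ≠ k → q' i = q i) (y : Z k) :
    Eminus p q' k y = Eminus p q k y := by
  unfold Eminus
  refine Finset.sum_congr rfl fun w _ => ?_
  congr 1
  exact Finset.prod_congr rfl fun i _ => by rw [h i i.2]

/-- The value of `F` at the CAVI update is the log normalizer. -/
lemma F_cavi [Fintype ι] [DecidableEq ι] [∀ i, Fintype (Z i)] [∀ i, Nonempty (Z i)]
    (p : (∀ i, Z i) → ℝ) (q : ∀ i, Z i → ℝ) (k : ι) :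
    ∑ y, caviUpdate p q k y * (Eminus p q k y - Real.log (caviUpdate p q k y))
      = Real.log (∑ y : Z k, Real.exp (Eminus p q k y)) := by
  set S := ∑ y : Z k, Real.exp (Eminus p q k y) with hS
  have hSpos : 0 < S := Finset.sum_pos (fun y _ => Real.exp_pos _) univ_nonempty
  have h1 : ∀ y : Z k, caviUpdate p q k y * (Eminus p q k y - Real.log (caviUpdate p q k y))
      = Real.exp (Eminus p q k y) / S * Real.log S := by
    intro y
    rw [caviUpdate, ← hS, Real.log_div (Real.exp_ne_zero _) hSpos.ne', Real.log_exp]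
    ring
  rw [Finset.sum_congr rfl fun y _ => h1 y, ← Finset.sum_mul, ← Finset.sum_div, ← hS,
    div_self hSpos.ne', one_mul]

/-- Along any CAVI sequence the ELBO increases monotonically, is bounded above by the
log evidence, and hence converges. -/
theorem cavi_sequence_elbo_monotone_bounded_converges [Fintype ι] [DecidableEq ι]
    [Nonempty ι] [∀ i, Fintype (Z i)] [∀ i, Nonempty (Z i)]
    (p : (∀ i, Z i) → ℝ) (hp : ∀ z, 0 < p z)
    (Q : ℕ → ∀ i, Z i → ℝ)
    (hQpos : ∀ n i y, 0 < Q n i y) (hQ1 : ∀ n i, ∑ y, Q n i y = 1)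
    (hCAVI : ∀ n, ∃ k : ι, (∀ i, i ≠ k → Q (n + 1) i = Q n i) ∧
      Q (n + 1) k = caviUpdate p (Q n) k) :
    (∀ n, meanFieldELBO p (Q n) ≤ meanFieldELBO p (Q (n + 1))) ∧
    (∀ n, meanFieldELBO p (Q n) ≤ Real.log (∑ z : ∀ i, Z i, p z)) ∧
    ∃ L : ℝ, Filter.Tendsto (fun n => meanFieldELBO p (Q n)) Filter.atTop (nhds L) := by
  have hmono : ∀ n, meanFieldELBO p (Q n) ≤ meanFieldELBO p (Q (n + 1)) := by
    intro n
    obtain ⟨k, hoff, hupd⟩ := hCAVI n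
    rw [elbo_decomp p (Q n) k (hQ1 n), elbo_decomp p (Q (n + 1)) k (hQ1 (n + 1))]
    have hEeq : ∀ y, Eminus p (Q (n + 1)) k y = Eminus p (Q n) k y :=
      Eminus_congr p (Q n) (Q (n + 1)) k hoff
    have hTeq : (∑ w : ∀ i : {i : ι // i ≠ k}, Z i,
        (∏ i : {i : ι // i ≠ k}, Q (n + 1) i (w i)) *
          ∑ i : {i : ι // i ≠ k}, Real.log (Q (n + 1) i (w i)))
        = ∑ w : ∀ i : {i : ι // i ≠ k}, Z i,
        (∏ i : {i : ι // i ≠ k}, Q n i (w i)) *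
          ∑ i : {i : ι // i ≠ k}, Real.log (Q n i (w i)) := by
      refine Finset.sum_congr rfl fun w _ => ?_
      rw [Finset.prod_congr rfl fun i _ => by rw [hoff i i.2],
        Finset.sum_congr rfl fun i _ => by rw [hoff i i.2]]
    rw [hTeq]
    refine sub_le_sub_right ?_ _
    have hle : ∑ y, Q n k y * (Eminus p (Q n) k y - Real.log (Q n k y))
        ≤ Real.log (∑ y : Z k, Real.exp (Eminus p (Q n) k y)) := by
      have := gibbs_ineq (Q n k) (fun y => Real.exp (Eminus p (Q n) k y))
        (hQpos n k) (hQ1 n k) (fun y => Real.exp_pos _)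
      simpa only [Real.log_exp] using this
    refine hle.trans (le_of_eq ?_)
    rw [← F_cavi p (Q n) k]
    refine (Finset.sum_congr rfl fun y _ => ?_).symm
    rw [hupd, hEeq y]
  have hbdd : ∀ n, meanFieldELBO p (Q n) ≤ Real.log (∑ z : ∀ i, Z i, p z) := by
    intro n
    have hw1 : ∑ z : ∀ i, Z i, ∏ i, Q n i (z i) = 1 := by
      rw [← Fintype.prod_sum]
      simp [hQ1 n]
    have h1 : meanFieldELBO p (Q n)
        = ∑ z : ∀ i, Z i, (∏ i, Q n i (z i)) *
            (Real.log (p z) - Real.log (∏ i, Q n i (z i))) := by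
      rw [meanFieldELBO]
      refine Finset.sum_congr rfl fun z _ => ?_
      rw [Real.log_prod fun i _ => (hQpos n i (z i)).ne']
    rw [h1]
    exact gibbs_ineq _ p (fun z => Finset.prod_pos fun i _ => hQpos n i (z i)) hw1 hp
  refine ⟨hmono, hbdd, ?_⟩
  exact ⟨_, tendsto_atTop_ciSup (monotone_nat_of_le_succ hmono)
    ⟨Real.log (∑ z : ∀ i, Z i, p z), by rintro _ ⟨n, rfl⟩; exact hbdd n⟩⟩
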